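/- arXiv:2312.13185 — 4 statements merged into one kernel-verified Lean document; each statement's English description precedes it below -/
import Mathlib

section
/- For every finite simple graph G on vertex set Fin N and every vertex v, the graph state |G⟩ := (∏_{{i,j} ∈ E(G)} CZ_{i,j}) |+⟩^{⊗N} is a +1 eigenvector of the stabilizer generator K_v := X_v · ∏_{w ∈ N_G(v)} Z_w, i.e. K_v |G⟩ = |G⟩. -/
open Matrix Complex
open scoped Kronecker Classical

noncomputable section

namespace QCA

/-- Computational-basis index set of an `N`-qubit register. -/
abbrev QIdx (N : ℕ) := Fin N → Fin 2

/-- Operators (matrices) on an `N`-qubit register `(ℂ²)^{⊗N}`. -/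
abbrev MatQ (N : ℕ) := Matrix (QIdx N) (QIdx N) ℂ

/-- Pauli X. -/
def Xg : Matrix (Fin 2) (Fin 2) ℂ := !![0, 1; 1, 0]

/-- Pauli Z. -/
def Zg : Matrix (Fin 2) (Fin 2) ℂ := !![1, 0; 0, -1]

/-- Pauli Y = i·X·Z. -/
def Yg : Matrix (Fin 2) (Fin 2) ℂ := Complex.I • (Xg * Zg)

/-- Hadamard gate. -/
def Hg : Matrix (Fin 2) (Fin 2) ℂ := (Real.sqrt 2 : ℂ)⁻¹ • !![1, 1; 1, -1]

/-- Phase gate S = diag(1, i). -/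
def Sg : Matrix (Fin 2) (Fin 2) ℂ := !![1, 0; 0, Complex.I]

/-- √X := H·S·H. -/
def sqrtXg : Matrix (Fin 2) (Fin 2) ℂ := Hg * Sg * Hg

/-- The ket |+⟩ = (|0⟩+|1⟩)/√2. -/
def ketPlus : Fin 2 → ℂ := fun _ => (Real.sqrt 2 : ℂ)⁻¹

/-- The bra ⟨+|. -/
def braPlus : Fin 2 → ℂ := fun a => star (ketPlus a)

/-- The product state |+⟩^{⊗ι}. -/
def ketPlusAll (ι : Type*) [Fintype ι] : (ι → Fin 2) → ℂ := fun s => ∏ i, ketPlus (s i)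

/-- Kronecker product of two vectors. -/
def kronVec {a b : Type*} (v : a → ℂ) (w : b → ℂ) : a × b → ℂ := fun p => v p.1 * w p.2

variable {ι : Type*} [Fintype ι] [DecidableEq ι]

/-- `op1 P i` acts as the one-qubit operator `P` on qubit `i` and as the identity elsewhere. -/
def op1 (P : Matrix (Fin 2) (Fin 2) ℂ) (i : ι) : Matrix (ι → Fin 2) (ι → Fin 2) ℂ :=
  fun s t => P (s i) (t i) * ∏ j ∈ Finset.univ.erase i, (if s j = t j then (1 : ℂ) else 0)

/-- Controlled-Z gate between qubits `i` and `j` (identity elsewhere). -/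
def cz2 (i j : ι) : Matrix (ι → Fin 2) (ι → Fin 2) ℂ :=
  Matrix.diagonal fun s => if s i = 1 ∧ s j = 1 then (-1 : ℂ) else 1

/-- The Z-rotation exp(iθ Z_i) on qubit `i`. -/
def rotZ (θ : ℝ) (i : ι) : Matrix (ι → Fin 2) (ι → Fin 2) ℂ :=
  NormedSpace.exp (((θ : ℂ) * Complex.I) • op1 Zg i)

/-- The layer ∏_{i=1}^{N} H_i of Hadamards on every site of a ring of `N` qubits. -/
def hadamardLayer (N : ℕ) : MatQ N := (List.ofFn fun i : Fin N => op1 Hg i).prod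

/-- The layer ∏_{i=1}^{N} CZ_{i,i+1} of controlled-Z gates on a ring of `N` qubits
(site indices mod `N`; the factors pairwise commute). -/
def czRing (N : ℕ) [NeZero N] : MatQ N := (List.ofFn fun i : Fin N => cz2 i (i + 1)).prod

/-- The layer ∏_{i=1}^{N} (√X)_i on a ring of `N` qubits. -/
def sqrtXLayer (N : ℕ) : MatQ N := (List.ofFn fun i : Fin N => op1 sqrtXg i).prod

/-- The cluster CQCA T_c = (∏ H_i)·(∏ CZ_{i,i+1}) on a ring of `N` qubits. -/
def Tc (N : ℕ) [NeZero N] : MatQ N := hadamardLayer N * czRing N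

/-- The periodic CQCA T̃_c = ∏ CZ_{i,i+1} on a ring of `N` qubits. -/
def Ttc (N : ℕ) [NeZero N] : MatQ N := czRing N

/-- The fractal CQCA T̂_c = (∏ H_i)·(∏ CZ_{i,i+1})·(∏ (√X)_i) on a ring of `N` qubits. -/
def Thc (N : ℕ) [NeZero N] : MatQ N := hadamardLayer N * czRing N * sqrtXLayer N

/-- Controlled-Z between input qubit `i` and output qubit `i` on a doubled register. -/
def czIO {N : ℕ} (i : Fin N) : Matrix (QIdx N × QIdx N) (QIdx N × QIdx N) ℂ :=
  Matrix.diagonal fun p => if p.1 i = 1 ∧ p.2 i = 1 then (-1 : ℂ) else 1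

/-- The unitary U_T = (1 ⊗ T)·(∏_i H_i^{(out)})·(∏_i CZ_{i,i}^{(in,out)}) of Eq. (16). -/
def UT {N : ℕ} (T : MatQ N) : Matrix (QIdx N × QIdx N) (QIdx N × QIdx N) ℂ :=
  ((1 : MatQ N) ⊗ₖ T) *
    (List.ofFn fun i : Fin N => (1 : MatQ N) ⊗ₖ op1 Hg i).prod *
    (List.ofFn fun i : Fin N => czIO i).prod

/-- Contraction of the input register with the product bra `⊗_i bra i`. -/
def contractIn {N : ℕ} (bra : Fin N → Fin 2 → ℂ) (v : QIdx N × QIdx N → ℂ) : QIdx N → ℂ :=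
  fun t => ∑ s : QIdx N, (∏ i, bra i (s i)) * v (s, t)

lemma diagonal_commute {α : Type*} [Fintype α] [DecidableEq α] (d e : α → ℂ) :
    Commute (Matrix.diagonal d) (Matrix.diagonal e) := by
  unfold Commute SemiconjBy
  have h : (fun i => d i * e i) = fun i => e i * d i := by funext x; ring
  rw [Matrix.diagonal_mul_diagonal, Matrix.diagonal_mul_diagonal, h]

lemma Zg_eq_diagonal : Zg = Matrix.diagonal ![1, -1] := by
  ext i j
  fin_cases i <;> fin_cases j <;> simp [Zg, Matrix.diagonal]

lemma op1_diagonal (d : Fin 2 → ℂ) (i : ι) :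
    op1 (Matrix.diagonal d) i = Matrix.diagonal (fun s => d (s i)) := by
  ext s t
  by_cases h : s = t
  · subst h
    simp [op1, Matrix.diagonal_apply_eq]
  · rw [Matrix.diagonal_apply_ne _ h]
    by_cases hi : s i = t i
    · obtain ⟨k, hk⟩ : ∃ k, s k ≠ t k := Function.ne_iff.mp h
      have hki : k ≠ i := by rintro rfl; exact hk hi
      have h0 : (if s k = t k then (1 : ℂ) else 0) = 0 := by simp [hk]
      unfold op1
      rw [Finset.prod_eq_zero (Finset.mem_erase.mpr ⟨hki, Finset.mem_univ k⟩) h0]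
      ring
    · unfold op1
      rw [Matrix.diagonal_apply_ne _ hi]
      ring

/-- The controlled-Z gate attached to an (undirected) edge `e`. -/
def czEdge {N : ℕ} (e : Sym2 (Fin N)) : MatQ N :=
  Matrix.diagonal fun s => if ∀ i ∈ e, s i = 1 then (-1 : ℂ) else 1

/-- The unitary ∏_{{i,j} ∈ E(G)} CZ_{i,j} preparing the graph state (the
factors pairwise commute, so the product over the edge set is well defined). -/
def graphUnitary {N : ℕ} (G : SimpleGraph (Fin N)) [DecidableRel G.Adj] : MatQ N :=
  G.edgeFinset.noncommProd czEdge (by intro a _ b _ _; exact diagonal_commute _ _)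

/-- The graph state |G⟩ = (∏_{{i,j} ∈ E(G)} CZ_{i,j}) |+⟩^{⊗N}. -/
def graphState {N : ℕ} (G : SimpleGraph (Fin N)) [DecidableRel G.Adj] : QIdx N → ℂ :=
  (graphUnitary G).mulVec (ketPlusAll (Fin N))

/-- The stabilizer generator K_v = X_v · ∏_{w ∈ N_G(v)} Z_w of the graph state
(the Z factors pairwise commute, so the product is well defined). -/
def stabGen {N : ℕ} (G : SimpleGraph (Fin N)) [DecidableRel G.Adj] (v : Fin N) : MatQ N :=
  op1 Xg v *
    (G.neighborFinset v).noncommProd (fun w => op1 Zg w)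
      (by
        intro a _ b _ _
        simp only [Function.onFun]
        rw [Zg_eq_diagonal, op1_diagonal, op1_diagonal]
        exact diagonal_commute _ _)



lemma Xg_succ (a : Fin 2) : Xg a (a + 1) = 1 := by
  fin_cases a <;>
    simp [Xg, show ((1:Fin 2)+1) = 0 from rfl, show ((0:Fin 2)+1) = 1 from rfl]

lemma Xg_zero {a b : Fin 2} (h : b ≠ a + 1) : Xg a b = 0 := by
  fin_cases a <;> fin_cases b <;>
    first
      | (exact absurd rfl h)
      | simp [Xg, show ((1:Fin 2)+1) = 0 from rfl, show ((0:Fin 2)+1) = 1 from rfl]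

lemma op1X_mulVec (v : ι) (g : (ι → Fin 2) → ℂ) :
    (op1 Xg v).mulVec g = fun s => g (Function.update s v (s v + 1)) := by
  funext s
  unfold Matrix.mulVec dotProduct op1
  rw [Finset.sum_eq_single (Function.update s v (s v + 1))]
  · dsimp only
    rw [Function.update_self, Xg_succ,
      Finset.prod_congr rfl (fun j hj => by
        rw [Function.update_of_ne (Finset.mem_erase.mp hj).1, if_pos rfl])]
    simp
  · intro t _ hne
    dsimp only
    by_cases hv : t v = s v + 1
    · obtain ⟨j, hj⟩ : ∃ j, t j ≠ Function.update s v (s v + 1) j := Function.ne_iff.mp hne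
      have hjv : j ≠ v := by rintro rfl; simp [hv] at hj
      have hj' : s j ≠ t j := fun h => hj (by rw [Function.update_of_ne hjv, ← h])
      rw [Finset.prod_eq_zero (Finset.mem_erase.mpr ⟨hjv, Finset.mem_univ j⟩)
        (by simp [hj'])]
      ring
    · rw [Xg_zero hv]; ring
  · intro h; exact absurd (Finset.mem_univ _) h

lemma noncommProd_diagonal {β n : Type*} [Fintype n] [DecidableEq n]
    (s : Finset β) (d : β → n → ℂ) (comm) :
    s.noncommProd (fun b => Matrix.diagonal (d b)) comm
      = Matrix.diagonal (fun a => ∏ b ∈ s, d b a) := by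
  have h := Finset.map_noncommProd s d (fun a _ b _ _ => Commute.all _ _)
      (Matrix.diagonalRingHom n ℂ)
  rw [Finset.noncommProd_eq_prod] at h
  have h2 : (Matrix.diagonalRingHom n ℂ) (∏ b ∈ s, d b)
      = Matrix.diagonal (fun a => ∏ b ∈ s, d b a) := by
    show Matrix.diagonal (∏ b ∈ s, d b) = _
    congr 1; ext a; simp [Finset.prod_apply]
  rw [h2] at h
  exact h.symm

lemma incident_prod_eq {N : ℕ} (G : SimpleGraph (Fin N)) [DecidableRel G.Adj]
    (v : Fin N) (t : QIdx N) :
    ∏ e ∈ G.edgeFinset.filter (fun e => v ∈ e),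
        (if ∀ i ∈ e, t i = 1 then (-1 : ℂ) else 1)
      = ∏ w ∈ G.neighborFinset v, (if t v = 1 ∧ t w = 1 then (-1 : ℂ) else 1) := by
  classical
  refine (Finset.prod_bij (fun w _ => s(v, w)) ?_ ?_ ?_ ?_).symm
  · intro w hw
    rw [SimpleGraph.mem_neighborFinset] at hw
    simp [SimpleGraph.mem_edgeFinset, hw]
  · intro a ha b hb h
    rw [SimpleGraph.mem_neighborFinset] at ha hb
    rcases Sym2.eq_iff.mp h with ⟨-, h2⟩ | ⟨h1, h2⟩
    · exact h2
    · exact absurd h2 (G.ne_of_adj ha).symm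
  · intro e he
    simp only [Finset.mem_filter, SimpleGraph.mem_edgeFinset] at he
    obtain ⟨he1, he2⟩ := he
    induction e using Sym2.ind with
    | _ a b =>
      rw [Sym2.mem_iff] at he2
      rw [SimpleGraph.mem_edgeSet] at he1
      rcases he2 with rfl | rfl
      · exact ⟨b, by rw [SimpleGraph.mem_neighborFinset]; exact he1, rfl⟩
      · exact ⟨a, by rw [SimpleGraph.mem_neighborFinset]; exact he1.symm,
          Sym2.eq_swap⟩
  · intro w hw
    rw [SimpleGraph.mem_neighborFinset] at hw
    congr 1
    have : (∀ i ∈ s(v, w), t i = 1) ↔ (t v = 1 ∧ t w = 1) := by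
      constructor
      · intro h
        exact ⟨h v (Sym2.mem_mk_left v w), h w (Sym2.mem_mk_right v w)⟩
      · rintro ⟨h1, h2⟩ i hi
        rcases Sym2.mem_iff.mp hi with rfl | rfl
        · exact h1
        · exact h2
    rw [this]

lemma flip_keyval (a b : Fin 2) :
    (![(1 : ℂ), -1]) b * (if a + 1 = 1 ∧ b = 1 then (-1 : ℂ) else 1)
      = if a = 1 ∧ b = 1 then (-1 : ℂ) else 1 := by
  fin_cases a <;> fin_cases b <;>
    norm_num [show ((1:Fin 2)+1) = 0 from rfl, show ((0:Fin 2)+1) = 1 from rfl]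

lemma key_identity {N : ℕ} (G : SimpleGraph (Fin N)) [DecidableRel G.Adj]
    (v : Fin N) (s : QIdx N) :
    (∏ w ∈ G.neighborFinset v,
        (![(1 : ℂ), -1]) (Function.update s v (s v + 1) w)) *
      ∏ e ∈ G.edgeFinset,
        (if ∀ i ∈ e, Function.update s v (s v + 1) i = 1 then (-1 : ℂ) else 1)
    = ∏ e ∈ G.edgeFinset, (if ∀ i ∈ e, s i = 1 then (-1 : ℂ) else 1) := by
  classical
  set s' := Function.update s v (s v + 1) with hs'
  have hsw : ∀ w, w ≠ v → s' w = s w := fun w hw => Function.update_of_ne hw _ _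
  have hsv : s' v = s v + 1 := Function.update_self _ _ _
  rw [← Finset.prod_filter_mul_prod_filter_not G.edgeFinset (fun e => v ∈ e)
      (fun e => if ∀ i ∈ e, s' i = 1 then (-1 : ℂ) else 1),
    ← Finset.prod_filter_mul_prod_filter_not G.edgeFinset (fun e => v ∈ e)
      (fun e => if ∀ i ∈ e, s i = 1 then (-1 : ℂ) else 1)]
  have hnot : ∏ e ∈ G.edgeFinset.filter (fun e => ¬ v ∈ e),
      (if ∀ i ∈ e, s' i = 1 then (-1 : ℂ) else 1)
      = ∏ e ∈ G.edgeFinset.filter (fun e => ¬ v ∈ e),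
      (if ∀ i ∈ e, s i = 1 then (-1 : ℂ) else 1) := by
    refine Finset.prod_congr rfl fun e he => ?_
    have hv : v ∉ e := (Finset.mem_filter.mp he).2
    have : (∀ i ∈ e, s' i = 1) ↔ (∀ i ∈ e, s i = 1) :=
      forall₂_congr fun i hi => by rw [hsw i (fun h => hv (h ▸ hi))]
    simp only [this]
  rw [hnot, incident_prod_eq G v s', incident_prod_eq G v s, ← mul_assoc]
  congr 1
  rw [← Finset.prod_mul_distrib]
  refine Finset.prod_congr rfl fun w hw => ?_
  rw [SimpleGraph.mem_neighborFinset] at hw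
  have hwv : w ≠ v := fun h => G.irrefl (h ▸ hw)
  rw [hsw w hwv, hsv, flip_keyval]

lemma ketPlusAll_const {N : ℕ} (u : QIdx N) :
    ketPlusAll (Fin N) u = ((Real.sqrt 2 : ℂ)⁻¹) ^ N := by
  simp [ketPlusAll, ketPlus]

/-- every stabilizer generator `K_v` fixes the graph state `|G⟩`. -/
theorem graphState_stabilized {N : ℕ} (G : SimpleGraph (Fin N)) [DecidableRel G.Adj]
    (v : Fin N) :
    (stabGen G v).mulVec (graphState G) = graphState G := by
  classical
  have hU : graphUnitary G = Matrix.diagonal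
      (fun s => ∏ e ∈ G.edgeFinset, (if ∀ i ∈ e, s i = 1 then (-1 : ℂ) else 1)) := by
    unfold graphUnitary czEdge
    exact noncommProd_diagonal _ _ _
  have hK : stabGen G v = op1 Xg v * Matrix.diagonal
      (fun s => ∏ w ∈ G.neighborFinset v, (![(1 : ℂ), -1]) (s w)) := by
    unfold stabGen
    congr 1
    refine Eq.trans (Finset.noncommProd_congr rfl
      (g := fun w => Matrix.diagonal fun s : QIdx N => (![(1 : ℂ), -1]) (s w))
      (fun w _ => by rw [Zg_eq_diagonal, op1_diagonal]) _) ?_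
    exact noncommProd_diagonal _ _ _
  unfold graphState
  rw [hK, hU, ← Matrix.mulVec_mulVec, op1X_mulVec]
  funext t
  simp only [Matrix.mulVec_diagonal]
  rw [ketPlusAll_const, ketPlusAll_const, ← mul_assoc, key_identity G v t]

end QCA

end
end

section
/- For every finite simple graph G on vertex set Fin N, the subgroup S_G of the group of invertible 2^N × 2^N complex matrices generated by the stabilizer generators {K_v := X_v · ∏_{w ∈ N_G(v)} Z_w : v ∈ Fin N} has exactly 2^N elements, and the rank-one projector onto the graph state |G⟩ := (∏_{{i,j} ∈ E(G)} CZ_{i,j}) |+⟩^{⊗N} satisfies |G⟩⟨G| = (1/2^N) · ∑_{S ∈ S_G} S. -/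
open Matrix Complex
open scoped Kronecker Classical

noncomputable section

namespace QCA

variable {ι : Type*} [Fintype ι] [DecidableEq ι]

/-- The outer product |v⟩⟨v| of a vector with itself. -/
def outerProd {N : ℕ} (v : QIdx N → ℂ) : MatQ N :=
  Matrix.of fun s t => v s * star (v t)


/-! ### Auxiliary development for the stabilizer theorem -/

section Aux

lemma fin2_add_one_ne : ∀ a : Fin 2, a + 1 ≠ a := by decide

lemma fin2_add_one_add_one : ∀ a : Fin 2, a + 1 + 1 = a := by decide

lemma fin2_eq_add_one_iff : ∀ a b : Fin 2, (b = a + 1 ↔ a ≠ b) := by decide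

variable {N : ℕ} (G : SimpleGraph (Fin N)) [DecidableRel G.Adj]

/-- Sign value of a single Z on a bit. -/
def zd : Fin 2 → ℂ := fun x => if x = 1 then -1 else 1

lemma zd_sq (x : Fin 2) : zd x * zd x = 1 := by
  unfold zd; split_ifs <;> ring

/-- Sign contributed by edge `e` on basis state `s`. -/
def chi (e : Sym2 (Fin N)) (s : QIdx N) : ℂ := if ∀ i ∈ e, s i = 1 then -1 else 1

lemma chi_sq (e : Sym2 (Fin N)) (s : QIdx N) : chi e s * chi e s = 1 := by
  unfold chi; split_ifs <;> ring

lemma star_chi (e : Sym2 (Fin N)) (s : QIdx N) : star (chi e s) = chi e s := by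
  unfold chi; split_ifs <;> simp

/-- Total sign of `s` in the graph state. -/
def eps (s : QIdx N) : ℂ := ∏ e ∈ G.edgeFinset, chi e s

lemma eps_sq (s : QIdx N) : eps G s * eps G s = 1 := by
  unfold eps
  rw [← Finset.prod_mul_distrib]
  exact Finset.prod_eq_one fun e _ => chi_sq e s

lemma eps_ne_zero (s : QIdx N) : eps G s ≠ 0 := by
  intro h
  have := eps_sq G s
  rw [h, mul_zero] at this
  exact zero_ne_one this

lemma star_eps (s : QIdx N) : star (eps G s) = eps G s := by
  unfold eps
  rw [star_prod]
  exact Finset.prod_congr rfl fun e _ => star_chi e s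

/-- Flip the bits in `A`. -/
def flipS (A : Finset (Fin N)) (s : QIdx N) : QIdx N := fun i => if i ∈ A then s i + 1 else s i

lemma flipS_flipS (A B : Finset (Fin N)) (s : QIdx N) :
    flipS B (flipS A s) = flipS (symmDiff A B) s := by
  funext i
  by_cases hA : i ∈ A <;> by_cases hB : i ∈ B <;>
    simp [flipS, hA, hB, Finset.mem_symmDiff, fin2_add_one_add_one]

lemma flipS_apply_of_ne {A : Finset (Fin N)} {s : QIdx N} {i : Fin N} (h : i ∉ A) :
    flipS A s i = s i := by simp [flipS, h]

lemma flipS_eq_iff (A B : Finset (Fin N)) (s : QIdx N) :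
    flipS A s = flipS B s ↔ A = B := by
  constructor
  · intro h
    ext i
    have hi := congrFun h i
    by_cases hA : i ∈ A <;> by_cases hB : i ∈ B
    · simp [hA, hB]
    · simp only [flipS, if_pos hA, if_neg hB] at hi
      exact absurd hi (fin2_add_one_ne (s i))
    · simp only [flipS, if_neg hA, if_pos hB] at hi
      exact absurd hi.symm (fin2_add_one_ne (s i))
    · simp [hA, hB]
  · rintro rfl; rfl

lemma chi_pair (v w : Fin N) (t : QIdx N) :
    chi s(v, w) t = if t v = 1 ∧ t w = 1 then -1 else 1 := by
  unfold chi
  congr 1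
  simp only [Sym2.mem_iff, eq_iff_iff]
  constructor
  · intro h; exact ⟨h v (Or.inl rfl), h w (Or.inr rfl)⟩
  · rintro ⟨h1, h2⟩ i (rfl | rfl) <;> assumption

lemma prod_incidence (v : Fin N) (F : Sym2 (Fin N) → ℂ) :
    ∏ e ∈ G.incidenceFinset v, F e = ∏ w ∈ G.neighborFinset v, F s(v, w) := by
  refine Finset.prod_bij'
    (fun e he => G.otherVertexOfIncident ((G.mem_incidenceFinset v e).mp he))
    (fun w hw => s(v, w)) ?_ ?_ ?_ ?_ ?_
  · intro e he
    rw [SimpleGraph.mem_neighborFinset]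
    exact G.incidence_other_prop ((G.mem_incidenceFinset v e).mp he)
  · intro w hw
    rw [G.mem_incidenceFinset v]
    exact G.mem_incidence_iff_neighbor.mpr ((SimpleGraph.mem_neighborFinset G v w).mp hw)
  · intro e he
    exact Sym2.other_spec' ((G.mem_incidenceFinset v e).mp he).2
  · intro w hw
    exact G.incidence_other_neighbor_edge ((SimpleGraph.mem_neighborFinset G v w).mp hw)
  · intro e he
    congr 1
    exact (Sym2.other_spec' ((G.mem_incidenceFinset v e).mp he).2).symm

lemma eps_flip (v : Fin N) (s : QIdx N) :
    eps G (flipS {v} s) = eps G s * ∏ w ∈ G.neighborFinset v, zd (s w) := by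
  classical
  unfold eps
  rw [← Finset.prod_filter_mul_prod_filter_not G.edgeFinset (fun e => v ∈ e) (chi · (flipS {v} s)),
      ← Finset.prod_filter_mul_prod_filter_not G.edgeFinset (fun e => v ∈ e) (chi · s)]
  have hnot : ∀ e ∈ G.edgeFinset.filter (fun e => ¬ v ∈ e),
      chi e (flipS {v} s) = chi e s := by
    intro e he
    rw [Finset.mem_filter] at he
    unfold chi
    congr 1
    simp only [eq_iff_iff]
    constructor <;> intro h i hi <;>
      have hx := flipS_apply_of_ne (A := {v}) (s := s) (i := i)
        (by simp; rintro rfl; exact he.2 hi)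
    · rw [← hx]; exact h i hi
    · rw [hx]; exact h i hi
  rw [Finset.prod_congr rfl hnot]
  have hfil : G.edgeFinset.filter (fun e => v ∈ e) = G.incidenceFinset v :=
    (SimpleGraph.incidenceFinset_eq_filter G v).symm
  rw [hfil, prod_incidence, prod_incidence]
  have hmain : ∀ w ∈ G.neighborFinset v,
      chi s(v, w) (flipS {v} s) = chi s(v, w) s * zd (s w) := by
    intro w hw
    have hvw : w ≠ v := by
      have := (SimpleGraph.mem_neighborFinset G v w).mp hw
      exact fun h => G.loopless.irrefl v (h ▸ this)
    have h1 : flipS {v} s v = s v + 1 := by simp [flipS]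
    have h2 : flipS {v} s w = s w := flipS_apply_of_ne (by simpa using hvw)
    rw [chi_pair, chi_pair, h1, h2]
    have : ∀ a : Fin 2, a = 0 ∨ a = 1 := by decide
    rcases this (s v) with ha | ha <;> rcases this (s w) with hb | hb <;>
      rw [ha, hb] <;> norm_num [zd] <;> decide
  rw [Finset.prod_congr rfl hmain, Finset.prod_mul_distrib]
  ring

/-- The matrix of ∏_{v ∈ A} K_v. -/
def gmat (A : Finset (Fin N)) : MatQ N :=
  Matrix.of fun s t => if t = flipS A s then eps G s * eps G t else 0

lemma gmat_apply (A : Finset (Fin N)) (s t : QIdx N) :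
    gmat G A s t = if t = flipS A s then eps G s * eps G t else 0 := rfl

lemma gmat_mul (A B : Finset (Fin N)) :
    gmat G A * gmat G B = gmat G (symmDiff A B) := by
  ext s t
  rw [Matrix.mul_apply, gmat_apply]
  rw [Finset.sum_eq_single (flipS A s)]
  · rw [gmat_apply, gmat_apply, if_pos rfl, ← flipS_flipS]
    by_cases h : t = flipS B (flipS A s)
    · rw [if_pos h, if_pos h]
      have hu := eps_sq G (flipS A s)
      calc eps G s * eps G (flipS A s) * (eps G (flipS A s) * eps G t)
          = (eps G (flipS A s) * eps G (flipS A s)) * (eps G s * eps G t) := by ring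
        _ = eps G s * eps G t := by rw [hu, one_mul]
    · rw [if_neg h, if_neg h, mul_zero]
  · intro u _ hu
    rw [gmat_apply, if_neg hu, zero_mul]
  · intro h
    exact absurd (Finset.mem_univ _) h

lemma gmat_one : gmat G ∅ = 1 := by
  ext s t
  rw [gmat_apply, Matrix.one_apply]
  have : flipS ∅ s = s := by funext i; simp [flipS]
  rw [this]
  by_cases h : t = s
  · subst h; rw [if_pos rfl, if_pos rfl, eps_sq]
  · rw [if_neg h, if_neg (fun hh => h hh.symm)]

lemma gmat_self_mul (A : Finset (Fin N)) : gmat G A * gmat G A = 1 := by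
  rw [gmat_mul, symmDiff_self]
  exact gmat_one G

/-- Diagonal matrices as a monoid hom from pointwise functions. -/
def diagHom : (QIdx N → ℂ) →* MatQ N where
  toFun := Matrix.diagonal
  map_one' := Matrix.diagonal_one
  map_mul' := fun a b => (Matrix.diagonal_mul_diagonal a b).symm

lemma diagHom_apply (f : QIdx N → ℂ) : (diagHom f : MatQ N) = Matrix.diagonal f := rfl

lemma graphUnitary_eq : graphUnitary G = Matrix.diagonal (eps G) := by
  unfold graphUnitary
  have h1 : ∀ e : Sym2 (Fin N), czEdge e = diagHom (chi e) := fun e => rfl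
  rw [Finset.noncommProd_congr rfl (fun e _ => h1 e)
      (by intro a _ b _ _; exact diagonal_commute _ _)]
  rw [← Finset.map_noncommProd (g := (diagHom : (QIdx N → ℂ) →* MatQ N))]
  rw [Finset.noncommProd_eq_prod]
  have hfn : (∏ e ∈ G.edgeFinset, chi e) = eps G := by
    funext s
    rw [Finset.prod_apply]
    rfl
  rw [diagHom_apply, hfn]
  exact fun a _ b _ _ => Commute.all _ _

lemma graphState_apply (s : QIdx N) :
    graphState G s = eps G s * ((Real.sqrt 2 : ℂ)⁻¹) ^ N := by
  unfold graphState
  rw [graphUnitary_eq, Matrix.mulVec_diagonal]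
  congr 1
  unfold ketPlusAll ketPlus
  rw [Finset.prod_const, Finset.card_univ, Fintype.card_fin]

lemma op1X_apply (v : Fin N) (s t : QIdx N) :
    op1 Xg v s t = if t = flipS {v} s then 1 else 0 := by
  by_cases h : t = flipS {v} s
  · subst h
    rw [if_pos rfl]
    unfold op1
    have hX : Xg (s v) (flipS {v} s v) = 1 := by
      have h0 : flipS {v} s v = s v + 1 := by simp [flipS]
      have h01 : Xg 0 1 = 1 := by norm_num [Xg]
      have h10 : Xg 1 0 = 1 := by norm_num [Xg]
      have hgen : ∀ a : Fin 2, Xg a (a + 1) = 1 := by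
        intro a
        fin_cases a
        · exact h01
        · exact h10
      rw [h0]; exact hgen (s v)
    rw [hX, one_mul]
    apply Finset.prod_eq_one
    intro j hj
    rw [flipS_apply_of_ne (by simpa using (Finset.mem_erase.mp hj).1)]
    simp
  · rw [if_neg h]
    unfold op1
    by_cases hv : t v = s v + 1
    · obtain ⟨k, hk⟩ : ∃ k, t k ≠ flipS {v} s k := Function.ne_iff.mp h
      have hkv : k ≠ v := by
        rintro rfl
        apply hk
        simp [flipS, hv]
      have hk' : t k ≠ s k := by
        rwa [flipS_apply_of_ne (by simpa using hkv)] at hk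
      have hns : ¬ s k = t k := fun hh => hk' hh.symm
      have hzero : (if s k = t k then (1 : ℂ) else 0) = 0 := if_neg hns
      rw [Finset.prod_eq_zero (Finset.mem_erase.mpr ⟨hkv, Finset.mem_univ k⟩) hzero]
      ring
    · have hX : Xg (s v) (t v) = 0 := by
        have hgen : ∀ a b : Fin 2, b ≠ a + 1 → Xg a b = 0 := by
          intro a b hab
          fin_cases a <;> fin_cases b <;> first
            | exact absurd rfl hab
            | norm_num [Xg]
        exact hgen _ _ hv
      rw [hX, zero_mul]

lemma stabGen_eq_gmat (v : Fin N) : stabGen G v = gmat G {v} := by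
  unfold stabGen
  have hZ : (G.neighborFinset v).noncommProd (fun w => op1 Zg w)
      (by intro a _ b _ _
          simp only [Function.onFun]
          rw [Zg_eq_diagonal, op1_diagonal, op1_diagonal]
          exact diagonal_commute _ _) =
      Matrix.diagonal (fun t => ∏ w ∈ G.neighborFinset v, zd (t w)) := by
    have hfn : (![1, -1] : Fin 2 → ℂ) = zd := by
      funext a; fin_cases a <;> simp [zd]
    have h1 : ∀ w : Fin N, op1 Zg w = diagHom (fun t => zd (t w)) := by
      intro w
      rw [Zg_eq_diagonal, op1_diagonal]
      show Matrix.diagonal _ = Matrix.diagonal _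
      rw [hfn]
    rw [Finset.noncommProd_congr rfl (fun w _ => h1 w)
        (by intro a _ b _ _
            simp only [Function.onFun]
            rw [Zg_eq_diagonal, op1_diagonal, op1_diagonal]
            exact diagonal_commute _ _)]
    rw [← Finset.map_noncommProd (g := (diagHom : (QIdx N → ℂ) →* MatQ N))]
    rw [Finset.noncommProd_eq_prod]
    have hfn2 : (∏ w ∈ G.neighborFinset v, fun t : QIdx N => zd (t w)) =
        fun t => ∏ w ∈ G.neighborFinset v, zd (t w) := by
      funext t
      rw [Finset.prod_apply]
    rw [diagHom_apply, hfn2]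
    exact fun a _ b _ _ => Commute.all _ _
  rw [hZ]
  ext s t
  rw [Matrix.mul_diagonal, op1X_apply, gmat_apply]
  by_cases h : t = flipS {v} s
  · subst h
    rw [if_pos rfl, if_pos rfl, one_mul]
    have hw : ∀ w ∈ G.neighborFinset v, zd (flipS {v} s w) = zd (s w) := by
      intro w hw
      have hadj := (SimpleGraph.mem_neighborFinset G v w).mp hw
      congr 1
      apply flipS_apply_of_ne
      simp only [Finset.mem_singleton]
      exact fun hwv => G.loopless.irrefl v (by rwa [hwv] at hadj)
    rw [Finset.prod_congr rfl hw, eps_flip, ← mul_assoc, eps_sq, one_mul]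
  · rw [if_neg h, if_neg h, zero_mul]

variable (N) in
/-- The stabilizer elements as invertible matrices. -/
def gGL (A : Finset (Fin N)) : Matrix.GeneralLinearGroup (QIdx N) ℂ :=
  ⟨gmat G A, gmat G A, gmat_self_mul G A, gmat_self_mul G A⟩

lemma gGL_val (A : Finset (Fin N)) : ((gGL N G A : Matrix.GeneralLinearGroup (QIdx N) ℂ) : MatQ N) = gmat G A := rfl

lemma gGL_mul (A B : Finset (Fin N)) :
    gGL N G A * gGL N G B = gGL N G (symmDiff A B) :=
  Units.ext (gmat_mul G A B)

lemma gGL_injective : Function.Injective (gGL N G) := by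
  intro A B h
  have h2 : gmat G A = gmat G B := congrArg Units.val h
  have h3 := congrFun (congrFun h2 (fun _ => 0)) (flipS A (fun _ => 0))
  rw [gmat_apply, gmat_apply, if_pos rfl] at h3
  by_cases hc : flipS A (fun _ => 0) = flipS B (fun _ => 0)
  · exact (flipS_eq_iff A B _).mp hc
  · rw [if_neg hc] at h3
    exact absurd h3 (mul_ne_zero (eps_ne_zero G _) (eps_ne_zero G _))

/-- The stabilizer group as an explicit subgroup. -/
def stabSubgroup : Subgroup (Matrix.GeneralLinearGroup (QIdx N) ℂ) where
  carrier := Set.range (gGL N G)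
  mul_mem' := by
    rintro _ _ ⟨A, rfl⟩ ⟨B, rfl⟩
    exact ⟨symmDiff A B, (gGL_mul G A B).symm⟩
  one_mem' := ⟨∅, Units.ext (gmat_one G)⟩
  inv_mem' := by
    rintro _ ⟨A, rfl⟩
    refine ⟨A, ?_⟩
    rw [eq_comm, inv_eq_iff_mul_eq_one, gGL_mul, symmDiff_self]
    exact Units.ext (gmat_one G)

lemma closure_eq_stabSubgroup :
    Subgroup.closure
        {g : Matrix.GeneralLinearGroup (QIdx N) ℂ | ∃ v : Fin N, (g : MatQ N) = stabGen G v}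
      = stabSubgroup G := by
  apply le_antisymm
  · rw [Subgroup.closure_le]
    rintro g ⟨v, hv⟩
    refine ⟨{v}, ?_⟩
    apply Units.ext
    rw [gGL_val, hv, stabGen_eq_gmat]
  · rintro _ ⟨A, rfl⟩
    induction A using Finset.induction with
    | empty =>
        have : gGL N G ∅ = 1 := Units.ext (gmat_one G)
        rw [this]
        exact Subgroup.one_mem _
    | insert _ _ hvA ih =>
        rename_i v A
        have h1 : gGL N G {v} * gGL N G A = gGL N G (insert v A) := by
          rw [gGL_mul]
          congr 1
          rw [Finset.disjoint_singleton_left.mpr hvA |>.symmDiff_eq_sup]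
          simp [Finset.insert_eq, -Finset.singleton_union]
        rw [← h1]
        refine Subgroup.mul_mem _ ?_ ih
        apply Subgroup.subset_closure
        exact ⟨v, by rw [gGL_val, stabGen_eq_gmat]⟩

lemma sum_gmat :
    ∑ A : Finset (Fin N), gmat G A = Matrix.of fun s t => eps G s * eps G t := by
  ext s t
  rw [Matrix.sum_apply]
  classical
  rw [Finset.sum_eq_single (Finset.univ.filter (fun i => s i ≠ t i))]
  · have hA : t = flipS (Finset.univ.filter (fun i => s i ≠ t i)) s := by
      funext i
      by_cases h : s i = t i
      · rw [flipS_apply_of_ne (by simp [h])]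
        exact h.symm
      · have hmem : i ∈ Finset.univ.filter (fun i => s i ≠ t i) := by simp [h]
        simp only [flipS, hmem, if_pos]
        exact (fin2_eq_add_one_iff (s i) (t i)).mpr h
    rw [gmat_apply, if_pos hA]
    rfl
  · intro B _ hB
    rw [gmat_apply, if_neg]
    intro hc
    apply hB
    ext i
    simp only [Finset.mem_filter, Finset.mem_univ, true_and]
    have hi := congrFun hc i
    by_cases hiB : i ∈ B
    · simp only [flipS, hiB, if_pos] at hi
      simp [hiB, (fin2_eq_add_one_iff (s i) (t i)).mp hi]
    · rw [flipS_apply_of_ne hiB] at hi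
      simp [hiB, hi]
  · intro h
    exact absurd (Finset.mem_univ _) h

end Aux

/-- the stabilizer group `S_G` generated (inside the group of invertible
`2^N × 2^N` matrices) by the stabilizer generators `K_v` has exactly `2^N` elements, and
`|G⟩⟨G| = 2^{-N} ∑_{S ∈ S_G} S`. -/
theorem stabilizer_group_card_and_projector {N : ℕ} (G : SimpleGraph (Fin N))
    [DecidableRel G.Adj] :
    Nat.card ↥(Subgroup.closure
        {g : Matrix.GeneralLinearGroup (QIdx N) ℂ | ∃ v : Fin N, (g : MatQ N) = stabGen G v})
      = 2 ^ N ∧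
    outerProd (graphState G) =
      ((2 : ℂ) ^ N)⁻¹ •
        ∑ᶠ g ∈ (↑(Subgroup.closure
            {g : Matrix.GeneralLinearGroup (QIdx N) ℂ | ∃ v : Fin N, (g : MatQ N) = stabGen G v})
            : Set (Matrix.GeneralLinearGroup (QIdx N) ℂ)),
          (g : MatQ N) := by
  classical
  rw [closure_eq_stabSubgroup G]
  refine ⟨?_, ?_⟩
  · have h1 : Nat.card ↥(stabSubgroup G) = Nat.card ↥(Set.range (gGL N G)) := rfl
    rw [h1, Nat.card_range_of_injective (gGL_injective G), Nat.card_eq_fintype_card,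
      Fintype.card_finset, Fintype.card_fin]
  · have hset : ((stabSubgroup G : Subgroup (Matrix.GeneralLinearGroup (QIdx N) ℂ)) :
        Set (Matrix.GeneralLinearGroup (QIdx N) ℂ)) = Set.range (gGL N G) := rfl
    rw [hset, finsum_mem_range (gGL_injective G), finsum_eq_sum_of_fintype]
    have hsum : (∑ A : Finset (Fin N),
          ((gGL N G A : Matrix.GeneralLinearGroup (QIdx N) ℂ) : MatQ N))
        = Matrix.of fun s t => eps G s * eps G t := by
      rw [← sum_gmat G]
      exact Finset.sum_congr rfl fun A _ => gGL_val G A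
    rw [hsum]
    ext s t
    rw [Matrix.smul_apply, Matrix.of_apply, smul_eq_mul]
    show graphState G s * star (graphState G t) = _
    rw [graphState_apply, graphState_apply, star_mul', star_eps]
    have hstarc : star (((Real.sqrt 2 : ℂ))⁻¹ ^ N) = ((Real.sqrt 2 : ℂ))⁻¹ ^ N := by
      simp [Complex.star_def, map_pow, map_inv₀, Complex.conj_ofReal]
    rw [hstarc]
    have h2 : (Real.sqrt 2 : ℂ) * (Real.sqrt 2 : ℂ) = 2 := by
      rw [← Complex.ofReal_mul, Real.mul_self_sqrt (by norm_num)]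
      norm_num
    have hc : ((Real.sqrt 2 : ℂ)⁻¹) ^ N * ((Real.sqrt 2 : ℂ)⁻¹) ^ N = ((2 : ℂ) ^ N)⁻¹ := by
      rw [← mul_pow, ← mul_inv, h2, inv_pow]
    rw [← hc]
    ring

end QCA

end
end

section
/- The square of the cluster CQCA produces the three-body entangling generator used in the universal gate set of CAQC: for a ring of N ≥ 3 qubits and every site i, T_c² Z_i (T_c²)† = X_{i-1} Z_i X_{i+1} (indices mod N); consequently, for every θ ∈ ℝ, T_c² · exp(iθ Z_i) · (T_c²)† = exp(iθ · X_{i-1} Z_i X_{i+1}). -/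
open Matrix Complex
open scoped Kronecker Classical

noncomputable section

namespace QCA

variable {ι : Type*} [Fintype ι] [DecidableEq ι]

set_option linter.unusedSectionVars false
set_option linter.unreachableTactic false
set_option linter.unusedTactic false

/-- tensor product of single-site operators -/
def tprod (M : ι → Matrix (Fin 2) (Fin 2) ℂ) : Matrix (ι → Fin 2) (ι → Fin 2) ℂ :=
  Matrix.of fun s t => ∏ j, M j (s j) (t j)

lemma tprod_apply (M : ι → Matrix (Fin 2) (Fin 2) ℂ) (s t : ι → Fin 2) :
    tprod M s t = ∏ j, M j (s j) (t j) := rfl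

lemma tprod_mul (A B : ι → Matrix (Fin 2) (Fin 2) ℂ) :
    tprod A * tprod B = tprod (fun j => A j * B j) := by
  ext s t
  simp only [Matrix.mul_apply, tprod_apply, ← Finset.prod_mul_distrib]
  rw [Fintype.prod_sum (fun j (a : Fin 2) => A j (s j) a * B j a (t j))]

lemma tprod_one : (tprod (fun _ => 1) : Matrix (ι → Fin 2) (ι → Fin 2) ℂ) = 1 := by
  ext s t
  by_cases h : s = t
  · subst h; simp [tprod_apply, Matrix.one_apply]
  · obtain ⟨k, hk⟩ := Function.ne_iff.mp h
    rw [tprod_apply, Matrix.one_apply_ne h]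
    exact Finset.prod_eq_zero (Finset.mem_univ k) (Matrix.one_apply_ne hk)

lemma op1_eq_tprod (P : Matrix (Fin 2) (Fin 2) ℂ) (i : ι) :
    op1 P i = tprod (Function.update (fun _ => 1) i P) := by
  ext s t
  rw [tprod_apply, ← Finset.mul_prod_erase _ _ (Finset.mem_univ i)]
  simp only [Function.update_self, op1]
  congr 1
  refine Finset.prod_congr rfl fun j hj => ?_
  rw [Function.update_of_ne (Finset.mem_erase.mp hj).1, Matrix.one_apply]

lemma tprod_conjTranspose (M : ι → Matrix (Fin 2) (Fin 2) ℂ) :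
    (tprod M)ᴴ = tprod (fun j => (M j)ᴴ) := by
  ext s t
  simp [tprod_apply, Matrix.conjTranspose_apply]

/-- product of a list of op1's at pairwise distinct sites is a tprod -/
lemma oplist_prod (f : ι → Matrix (Fin 2) (Fin 2) ℂ) :
    ∀ (l : List ι), l.Nodup →
      (l.map fun i => op1 (f i) i).prod = tprod (fun j => if j ∈ l then f j else 1)
  | [], _ => by simpa using tprod_one.symm
  | a :: l, h => by
    obtain ⟨ha, hl⟩ := List.nodup_cons.mp h
    rw [List.map_cons, List.prod_cons, oplist_prod f l hl, op1_eq_tprod, tprod_mul]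
    refine congrArg tprod (funext fun j => ?_)
    by_cases hj : j = a
    · subst hj
      simp [ha]
    · simp [Function.update_of_ne hj, List.mem_cons, hj]

lemma hadamardLayer_eq (N : ℕ) : hadamardLayer N = tprod (fun _ => Hg) := by
  rw [hadamardLayer, List.ofFn_eq_map, oplist_prod]
  · simp [List.mem_finRange]
  · exact List.nodup_finRange N

lemma diag_list_prod {α : Type*} [Fintype α] [DecidableEq α] :
    ∀ (l : List (α → ℂ)),
      (l.map Matrix.diagonal).prod = Matrix.diagonal fun s => (l.map (fun d => d s)).prod
  | [] => by simp
  | d :: l => by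
    rw [List.map_cons, List.prod_cons, diag_list_prod l, Matrix.diagonal_mul_diagonal]
    refine congrArg Matrix.diagonal (funext fun s => ?_)
    rw [List.map_cons, List.prod_cons]

/-- the ring phase function -/
def Dfun (N : ℕ) [NeZero N] : QIdx N → ℂ :=
  fun s => ∏ k : Fin N, if s k = 1 ∧ s (k + 1) = 1 then (-1 : ℂ) else 1

lemma czRing_eq (N : ℕ) [NeZero N] : czRing N = Matrix.diagonal (Dfun N) := by
  have : (List.ofFn fun i : Fin N => cz2 i (i + 1)) =
      (List.ofFn fun i : Fin N =>
        (fun s : QIdx N => if s i = 1 ∧ s (i + 1) = 1 then (-1 : ℂ) else 1)).map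
        Matrix.diagonal := by
    rw [List.map_ofFn]; rfl
  rw [czRing, this, diag_list_prod]
  refine congrArg Matrix.diagonal (funext fun s => ?_)
  rw [List.map_ofFn, List.prod_ofFn]
  rfl

-- ===== 2x2 facts =====

lemma sqrt2_mul_self : (Real.sqrt 2 : ℂ) * (Real.sqrt 2 : ℂ) = 2 := by
  norm_cast
  exact Real.mul_self_sqrt (by norm_num)

lemma sqrt2_ne_zero : (Real.sqrt 2 : ℂ) ≠ 0 := by
  intro h
  have := sqrt2_mul_self
  rw [h, mul_zero] at this
  norm_num at this

lemma Hg_mul_Hg : Hg * Hg = 1 := by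
  ext a b
  fin_cases a <;> fin_cases b <;>
    simp [Hg, Matrix.mul_apply, Fin.sum_univ_two, Matrix.one_apply] <;>
    field_simp <;> rw [sq, sqrt2_mul_self] <;> norm_num

lemma HZH : Hg * Zg * Hg = Xg := by
  ext a b
  fin_cases a <;> fin_cases b <;>
    simp [Hg, Zg, Xg, Matrix.mul_apply, Fin.sum_univ_two] <;>
    field_simp <;> rw [sq, sqrt2_mul_self] <;> ring

lemma HXH : Hg * Xg * Hg = Zg := by
  ext a b
  fin_cases a <;> fin_cases b <;>
    simp [Hg, Zg, Xg, Matrix.mul_apply, Fin.sum_univ_two] <;>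
    field_simp <;> rw [sq, sqrt2_mul_self] <;> ring

lemma Hg_conjTranspose : Hgᴴ = Hg := by
  ext a b
  fin_cases a <;> fin_cases b <;>
    simp [Hg, Matrix.conjTranspose_apply]

lemma Xg_apply_ne {a b : Fin 2} (h : a ≠ b) : Xg a b = 1 := by
  fin_cases a <;> fin_cases b <;> simp_all [Xg]

lemma Xg_apply_eq (a : Fin 2) : Xg a a = 0 := by
  fin_cases a <;> simp [Xg]

lemma Zg_apply_ne {a b : Fin 2} (h : a ≠ b) : Zg a b = 0 := by
  fin_cases a <;> fin_cases b <;> simp_all [Zg]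

lemma Zg_apply_eq (a : Fin 2) : Zg a a = if a = 1 then -1 else 1 := by
  fin_cases a <;> simp [Zg]

-- ===== layer facts =====

lemma hadamardLayer_conjTranspose (N : ℕ) : (hadamardLayer N)ᴴ = hadamardLayer N := by
  rw [hadamardLayer_eq, tprod_conjTranspose]
  simp [Hg_conjTranspose]

lemma hadamardLayer_sq (N : ℕ) : hadamardLayer N * hadamardLayer N = 1 := by
  rw [hadamardLayer_eq, tprod_mul]
  simp [Hg_mul_Hg, tprod_one]

lemma Dfun_star (N : ℕ) [NeZero N] (s : QIdx N) : star (Dfun N s) = Dfun N s := by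
  rw [Dfun, star_prod]
  refine Finset.prod_congr rfl fun k _ => ?_
  split_ifs <;> simp

lemma czRing_conjTranspose (N : ℕ) [NeZero N] : (czRing N)ᴴ = czRing N := by
  rw [czRing_eq, Matrix.diagonal_conjTranspose]
  exact congrArg Matrix.diagonal (funext fun s => Dfun_star N s)

lemma czRing_sq (N : ℕ) [NeZero N] : czRing N * czRing N = 1 := by
  rw [czRing_eq, Matrix.diagonal_mul_diagonal, ← Matrix.diagonal_one]
  refine congrArg Matrix.diagonal (funext fun s => ?_)
  simp only [Dfun, ← Finset.prod_mul_distrib]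
  refine Finset.prod_eq_one fun k _ => ?_
  split_ifs <;> norm_num

lemma Tc_conjTranspose (N : ℕ) [NeZero N] : (Tc N)ᴴ = czRing N * hadamardLayer N := by
  rw [Tc, Matrix.conjTranspose_mul, czRing_conjTranspose, hadamardLayer_conjTranspose]

-- ===== Fin facts =====

lemma fin_two_eq (a : Fin 2) : a = 0 ∨ a = 1 := by omega

section ring
variable {N : ℕ} [NeZero N] (i : Fin N)

lemma fin_one_val (hN : 3 ≤ N) : (1 : Fin N).val = 1 := by
  rw [Fin.val_one']
  exact Nat.mod_eq_of_lt (by omega)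

lemma fin_one_ne_zero (hN : 3 ≤ N) : (1 : Fin N) ≠ 0 := by
  intro h
  have h1 := fin_one_val (N := N) hN
  rw [h] at h1
  simp at h1

lemma fin_two_ne_zero (hN : 3 ≤ N) : (2 : Fin N) ≠ 0 := by
  have h1 : (2 : Fin N).val = 2 := by
    have h2 : (2 : Fin N) = 1 + 1 := by ext; simp [Fin.val_add]
    rw [h2, Fin.val_add, fin_one_val hN]
    exact Nat.mod_eq_of_lt (by omega)
  intro h
  rw [h] at h1
  simp at h1

lemma hsub_ne (hN : 3 ≤ N) : i - 1 ≠ i := by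
  intro h
  exact fin_one_ne_zero hN (sub_eq_self.mp h)

lemma hadd_ne (hN : 3 ≤ N) : i + 1 ≠ i := by
  intro h
  have h2 : i + 1 = i + 0 := by rw [add_zero]; exact h
  exact fin_one_ne_zero hN (add_left_cancel h2)

lemma hsub_ne_add (hN : 3 ≤ N) : i - 1 ≠ i + 1 := by
  intro h
  have h2 : i = i + 2 := by
    have h3 := congrArg (· + 1) h
    simp only [sub_add_cancel] at h3
    exact h3.trans (by rw [add_assoc]; congr 1; ext; simp [Fin.val_add])
  exact fin_two_ne_zero hN (left_eq_add.mp h2)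

lemma succ_eq_iff (k : Fin N) : k + 1 = i ↔ k = i - 1 := by
  constructor
  · intro h; rw [← h]; exact (add_sub_cancel_right k 1).symm
  · intro h; rw [h]; exact sub_add_cancel i 1

-- ===== conjugation steps =====

/-- The single-site pattern Z_{i-1} X_i Z_{i+1}. -/
def patZXZ : Fin N → Matrix (Fin 2) (Fin 2) ℂ :=
  Function.update (Function.update (Function.update (fun _ => 1) (i - 1) Zg) i Xg) (i + 1) Zg

lemma patZXZ_diag_ne (j : Fin N) {a b : Fin 2} (hab : a ≠ b) (hj : j ≠ i) :
    patZXZ i j a b = 0 := by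
  unfold patZXZ
  by_cases h1 : j = i + 1
  · subst h1; rw [Function.update_self]; exact Zg_apply_ne hab
  rw [Function.update_of_ne h1, Function.update_of_ne hj]
  by_cases h2 : j = i - 1
  · subst h2; rw [Function.update_self]; exact Zg_apply_ne hab
  · rw [Function.update_of_ne h2]; exact Matrix.one_apply_ne hab

lemma czRing_conj_X (hN : 3 ≤ N) : czRing N * op1 Xg i * czRing N = tprod (patZXZ i) := by
  have h1i : i - 1 ≠ i := hsub_ne i hN
  have h2i : i + 1 ≠ i := hadd_ne i hN
  have h12 : i - 1 ≠ i + 1 := hsub_ne_add i hN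
  have hsucc : (i - 1) + 1 = i := by exact sub_add_cancel i 1
  ext s t
  rw [czRing_eq, Matrix.mul_diagonal, Matrix.diagonal_mul, tprod_apply]
  by_cases hoff : ∀ j, j ≠ i → s j = t j
  · by_cases hi : s i = t i
    · -- s = t, X entry vanishes on both sides
      have hXz : Xg (s i) (t i) = 0 := by rw [hi]; exact Xg_apply_eq _
      have hL : op1 Xg i s t = 0 := by rw [op1, hXz, zero_mul]
      have hR : patZXZ i i (s i) (t i) = 0 := by
        unfold patZXZ
        rw [Function.update_of_ne (Ne.symm h2i), Function.update_self, hXz]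
      rw [hL, Finset.prod_eq_zero (Finset.mem_univ i) hR]
      ring
    · -- flip at site i
      have hL1 : op1 Xg i s t = 1 := by
        rw [op1, Xg_apply_ne hi]
        rw [Finset.prod_eq_one fun j hj => by
          rw [if_pos (hoff j (Finset.mem_erase.mp hj).1)]]
        ring
      rw [hL1]
      -- RHS product reduces to the three special sites
      have hRHS : (∏ j, patZXZ i j (s j) (t j)) =
          Zg (s (i-1)) (t (i-1)) * Xg (s i) (t i) * Zg (s (i+1)) (t (i+1)) := by
        have hsub : ({i - 1, i, i + 1} : Finset (Fin N)) ⊆ Finset.univ :=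
          Finset.subset_univ _
        rw [← Finset.prod_subset hsub (fun j _ hj => ?_)]
        · rw [Finset.prod_insert (by
              simp only [Finset.mem_insert, Finset.mem_singleton]
              push_neg
              exact ⟨h1i, h12⟩),
            Finset.prod_insert (by
              simp only [Finset.mem_singleton]
              exact Ne.symm h2i),
            Finset.prod_singleton]
          unfold patZXZ
          rw [Function.update_of_ne h12, Function.update_of_ne h1i,
            Function.update_self, Function.update_of_ne (Ne.symm h2i), Function.update_self,
            Function.update_self]
          ring
        · -- j outside the three sites: factor is 1
          simp only [Finset.mem_insert, Finset.mem_singleton, not_or] at hj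
          obtain ⟨hj1, hj2, hj3⟩ := hj
          unfold patZXZ
          rw [Function.update_of_ne hj3, Function.update_of_ne hj2,
            Function.update_of_ne hj1, Matrix.one_apply, if_pos (hoff j hj2)]
      rw [hRHS, Xg_apply_ne hi]
      rw [← hoff (i-1) (hsub_ne i hN), ← hoff (i+1) (hadd_ne i hN),
        Zg_apply_eq, Zg_apply_eq]
      -- now LHS phases
      have hD : Dfun N s * Dfun N t =
          (if s (i-1) = 1 then (-1:ℂ) else 1) * (if s (i+1) = 1 then (-1:ℂ) else 1) := by
        rw [Dfun, Dfun, ← Finset.prod_mul_distrib]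
        have hsub2 : ({i - 1, i} : Finset (Fin N)) ⊆ Finset.univ := Finset.subset_univ _
        rw [← Finset.prod_subset hsub2 (fun k _ hk => ?_)]
        · rw [Finset.prod_insert (by simp only [Finset.mem_singleton]; exact h1i),
            Finset.prod_singleton]
          rw [hsucc, ← hoff (i-1) (hsub_ne i hN), ← hoff (i+1) (hadd_ne i hN)]
          -- exactly one of s i, t i equals 1
          rcases fin_two_eq (s i) with h1 | h1 <;> rcases fin_two_eq (t i) with h2 | h2 <;>
            first
            | (exfalso; rw [h1, h2] at hi; exact hi rfl)
            | (rw [h1, h2]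
               rcases fin_two_eq (s (i-1)) with h3 | h3 <;>
                 rcases fin_two_eq (s (i+1)) with h4 | h4 <;>
                 simp [h3, h4] <;> norm_num)
        · simp only [Finset.mem_insert, Finset.mem_singleton, not_or] at hk
          obtain ⟨hk1, hk2⟩ := hk
          have hkk : s k = t k := hoff k hk2
          have hkk1 : s (k+1) = t (k+1) := hoff (k+1) (fun h => hk1 ((succ_eq_iff i k).mp h))
          rw [hkk, hkk1]
          split_ifs <;> norm_num
      rw [mul_one, hD]
      ring
  · -- a mismatch off site i: both sides vanish
    push_neg at hoff
    obtain ⟨j, hji, hj⟩ := hoff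
    have hL : op1 Xg i s t = 0 := by
      rw [op1, Finset.prod_eq_zero (Finset.mem_erase.mpr ⟨hji, Finset.mem_univ j⟩)
        (show (if s j = t j then (1:ℂ) else 0) = 0 from if_neg hj)]
      ring
    rw [hL, Finset.prod_eq_zero (Finset.mem_univ j) (patZXZ_diag_ne i j hj hji)]
    ring

/-- product of three op1's at distinct sites -/
lemma tprod_three (a b c : Fin N) (A B C : Matrix (Fin 2) (Fin 2) ℂ)
    (hab : a ≠ b) (hac : a ≠ c) (hbc : b ≠ c) :
    op1 A a * op1 B b * op1 C c =
      tprod (Function.update (Function.update (Function.update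
        (fun _ => 1) a A) b B) c C) := by
  rw [op1_eq_tprod, op1_eq_tprod, op1_eq_tprod, tprod_mul, tprod_mul]
  refine congrArg tprod (funext fun j => ?_)
  by_cases h1 : j = c
  · subst h1
    simp [Function.update_apply, hac.symm, hbc.symm]
  by_cases h2 : j = b
  · subst h2
    simp [Function.update_apply, hab.symm, hbc]
  by_cases h3 : j = a
  · subst h3
    simp [Function.update_apply, hab, hac, h1, h2]
  · simp [Function.update_apply, h1, h2, h3]

lemma H_conj_tprod (M : Fin N → Matrix (Fin 2) (Fin 2) ℂ) :
    hadamardLayer N * tprod M * hadamardLayer N = tprod (fun j => Hg * M j * Hg) := by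
  rw [hadamardLayer_eq, tprod_mul, tprod_mul]

lemma H_conj_Z : hadamardLayer N * op1 Zg i * hadamardLayer N = op1 Xg i := by
  rw [op1_eq_tprod, H_conj_tprod, op1_eq_tprod]
  refine congrArg tprod (funext fun j => ?_)
  by_cases h : j = i
  · subst h; rw [Function.update_self, Function.update_self, HZH]
  · rw [Function.update_of_ne h, Function.update_of_ne h, mul_one, Hg_mul_Hg]

/-- The pattern X_{i-1} Z_i X_{i+1}. -/
def patXZX : Fin N → Matrix (Fin 2) (Fin 2) ℂ :=
  Function.update (Function.update (Function.update (fun _ => 1) (i - 1) Xg) i Zg) (i + 1) Xg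

lemma H_conj_ZXZ (hN : 3 ≤ N) :
    hadamardLayer N * tprod (patZXZ i) * hadamardLayer N = tprod (patXZX i) := by
  have h1i : i - 1 ≠ i := hsub_ne i hN
  have h2i : i + 1 ≠ i := hadd_ne i hN
  have h12 : i - 1 ≠ i + 1 := hsub_ne_add i hN
  rw [H_conj_tprod]
  refine congrArg tprod (funext fun j => ?_)
  unfold patZXZ patXZX
  by_cases e1 : j = i + 1
  · subst e1; rw [Function.update_self, Function.update_self, HZH]
  rw [Function.update_of_ne e1, Function.update_of_ne e1]
  by_cases e2 : j = i
  · subst e2; rw [Function.update_self, Function.update_self, HXH]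
  rw [Function.update_of_ne e2, Function.update_of_ne e2]
  by_cases e3 : j = i - 1
  · subst e3; rw [Function.update_self, Function.update_self, HZH]
  · rw [Function.update_of_ne e3, Function.update_of_ne e3, mul_one, Hg_mul_Hg]

lemma cz_commute_Z : czRing N * op1 Zg i * czRing N = op1 Zg i := by
  have hz : op1 Zg i = Matrix.diagonal fun s : QIdx N => (![1, -1] : Fin 2 → ℂ) (s i) := by
    rw [show Zg = Matrix.diagonal ![1, -1] by
        ext a b; fin_cases a <;> fin_cases b <;> simp [Zg, Matrix.diagonal]]
    ext s t
    by_cases h : s = t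
    · subst h
      simp [op1, Matrix.diagonal_apply_eq]
    · rw [Matrix.diagonal_apply_ne _ h]
      by_cases hi : s i = t i
      · obtain ⟨k, hk⟩ : ∃ k, s k ≠ t k := Function.ne_iff.mp h
        have hki : k ≠ i := by rintro rfl; exact hk hi
        rw [op1, Finset.prod_eq_zero (Finset.mem_erase.mpr ⟨hki, Finset.mem_univ k⟩)
          (show (if s k = t k then (1:ℂ) else 0) = 0 from if_neg hk)]
        ring
      · rw [op1, Matrix.diagonal_apply_ne _ hi]
        ring
  rw [hz, czRing_eq, Matrix.diagonal_mul_diagonal, Matrix.diagonal_mul_diagonal]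
  refine congrArg Matrix.diagonal (funext fun s => ?_)
  have : Dfun N s * Dfun N s = 1 := by
    rw [Dfun, ← Finset.prod_mul_distrib]
    exact Finset.prod_eq_one fun k _ => by split_ifs <;> norm_num
  calc Dfun N s * (![1,-1] : Fin 2 → ℂ) (s i) * Dfun N s
      = (![1,-1] : Fin 2 → ℂ) (s i) * (Dfun N s * Dfun N s) := by ring
    _ = _ := by rw [this, mul_one]

lemma Tc_mul_conjTranspose : Tc N * (Tc N)ᴴ = 1 := by
  rw [Tc_conjTranspose, Tc, show hadamardLayer N * czRing N * (czRing N * hadamardLayer N) =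
      hadamardLayer N * (czRing N * czRing N) * hadamardLayer N by noncomm_ring,
    czRing_sq, mul_one, hadamardLayer_sq]

lemma conjTranspose_mul_Tc : (Tc N)ᴴ * Tc N = 1 := by
  rw [Tc_conjTranspose, Tc, show czRing N * hadamardLayer N * (hadamardLayer N * czRing N) =
      czRing N * (hadamardLayer N * hadamardLayer N) * czRing N by noncomm_ring,
    hadamardLayer_sq, mul_one, czRing_sq]

lemma key_conj (hN : 3 ≤ N) :
    Tc N ^ 2 * op1 Zg i * (Tc N ^ 2)ᴴ = op1 Xg (i - 1) * op1 Zg i * op1 Xg (i + 1) := by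
  have h1i : i - 1 ≠ i := hsub_ne i hN
  have h2i : i + 1 ≠ i := hadd_ne i hN
  have h12 : i - 1 ≠ i + 1 := hsub_ne_add i hN
  have hR : op1 Xg (i-1) * op1 Zg i * op1 Xg (i+1) = tprod (patXZX i) :=
    tprod_three (i-1) i (i+1) Xg Zg Xg h1i h12 (Ne.symm h2i)
  rw [hR]
  calc Tc N ^ 2 * op1 Zg i * (Tc N ^ 2)ᴴ
      = hadamardLayer N * (czRing N *
          (hadamardLayer N * (czRing N * op1 Zg i * czRing N) * hadamardLayer N)
            * czRing N) * hadamardLayer N := by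
        rw [Matrix.conjTranspose_pow, Tc_conjTranspose, Tc, pow_two, pow_two]
        noncomm_ring
    _ = tprod (patXZX i) := by
        rw [cz_commute_Z, H_conj_Z, czRing_conj_X i hN, H_conj_ZXZ i hN]

end ring

/-- `T_c² Z_i (T_c²)† = X_{i-1} Z_i X_{i+1}`, and consequently
`T_c² exp(iθZ_i) (T_c²)† = exp(iθ X_{i-1} Z_i X_{i+1})` for every θ. -/
theorem cluster_cqca_squared {N : ℕ} [NeZero N] (hN : 3 ≤ N) (i : Fin N) :
    Tc N ^ 2 * op1 Zg i * (Tc N ^ 2)ᴴ = op1 Xg (i - 1) * op1 Zg i * op1 Xg (i + 1) ∧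
    ∀ θ : ℝ,
      Tc N ^ 2 * NormedSpace.exp (((θ : ℂ) * Complex.I) • op1 Zg i) * (Tc N ^ 2)ᴴ =
        NormedSpace.exp
          (((θ : ℂ) * Complex.I) • (op1 Xg (i - 1) * op1 Zg i * op1 Xg (i + 1))) := by
  have key := key_conj i hN
  refine ⟨key, fun θ => ?_⟩
  have hU : Tc N ^ 2 * (Tc N ^ 2)ᴴ = 1 := by
    rw [Matrix.conjTranspose_pow, pow_two, pow_two,
      show Tc N * Tc N * ((Tc N)ᴴ * (Tc N)ᴴ)
          = Tc N * (Tc N * (Tc N)ᴴ) * (Tc N)ᴴ by noncomm_ring,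
      Tc_mul_conjTranspose, mul_one, Tc_mul_conjTranspose]
  have hU' : (Tc N ^ 2)ᴴ * Tc N ^ 2 = 1 := by
    rw [Matrix.conjTranspose_pow, pow_two, pow_two,
      show (Tc N)ᴴ * (Tc N)ᴴ * (Tc N * Tc N)
          = (Tc N)ᴴ * ((Tc N)ᴴ * Tc N) * Tc N by noncomm_ring,
      conjTranspose_mul_Tc, mul_one, conjTranspose_mul_Tc]
  have hUnit : IsUnit (Tc N ^ 2) := ⟨⟨Tc N ^ 2, (Tc N ^ 2)ᴴ, hU, hU'⟩, rfl⟩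
  have hInv : (Tc N ^ 2)⁻¹ = (Tc N ^ 2)ᴴ := Matrix.inv_eq_right_inv hU
  rw [← key, ← hInv,
    show ((θ : ℂ) * Complex.I) • (Tc N ^ 2 * op1 Zg i * (Tc N ^ 2)⁻¹)
        = Tc N ^ 2 * (((θ : ℂ) * Complex.I) • op1 Zg i) * (Tc N ^ 2)⁻¹ by
      rw [mul_smul_comm, smul_mul_assoc]]
  exact (Matrix.exp_conj (Tc N ^ 2) (((θ : ℂ) * Complex.I) • op1 Zg i) hUnit).symm

end QCA

end
end

section
/- Theorem 2 (unitary implemented by MBQC by unit cells): let T be a unitary on N qubits with T^L = 1, let D be a multiple of L, and let θ_i^j ∈ ℝ for i = 1,…,N, j = 1,…,D. For each j define the linear map E_j : (ℂ²)^{⊗N} → (ℂ²)^{⊗N} by E_j(v) := (√2)^N · (⟨+|^{⊗N} ⊗ 1) · U_T · ( (∏_{i=N,…,1} exp(iθ_i^j Z_i)) v ⊗ |+⟩^{⊗N} ), i.e. one unit cell of Algorithm 1 with all measurement outcomes equal to |+⟩. Then E_D ∘ ⋯ ∘ E_1 = ∏_{j=D,…,1} ∏_{i=N,…,1} exp( iθ_i^j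 · T^{e(j)} Z_i (T^{e(j)})† ), where e(j) := (L - (j mod L) + 1) mod L and products are ordered so that the factor with the smallest index acts first (rightmost). -/
open Matrix Complex
open scoped Kronecker Classical

noncomputable section

namespace QCA

variable {ι : Type*} [Fintype ι] [DecidableEq ι]

/-! ### Auxiliary lemmas -/

section Aux

/-- operator acting as `P` on every site in `s`, identity elsewhere -/
def opOn (P : Matrix (Fin 2) (Fin 2) ℂ) (s : Finset ι) : Matrix (ι → Fin 2) (ι → Fin 2) ℂ :=
  fun a b => (∏ i ∈ s, P (a i) (b i)) * ∏ j ∈ sᶜ, (if a j = b j then (1 : ℂ) else 0)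

lemma op1_eq_opOn (P : Matrix (Fin 2) (Fin 2) ℂ) (i : ι) : op1 P i = opOn P {i} := by
  ext a b
  simp [op1, opOn, Finset.compl_singleton]

lemma opOn_mul (P : Matrix (Fin 2) (Fin 2) ℂ) {s t : Finset ι} (h : Disjoint s t) :
    opOn P s * opOn P t = opOn P (s ∪ t) := by
  ext a b
  rw [Matrix.mul_apply]
  have hst : s ⊆ tᶜ := fun x hx =>
    Finset.mem_compl.mpr (fun ht => (Finset.disjoint_left.mp h) hx ht)
  rw [Finset.sum_eq_single (fun i => if i ∈ s then b i else a i)]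
  · unfold opOn
    have h1 : (∏ i ∈ s, P (a i) ((fun i => if i ∈ s then b i else a i) i)) =
        ∏ i ∈ s, P (a i) (b i) := Finset.prod_congr rfl (by intro i hi; simp [hi])
    have h2 : (∏ j ∈ sᶜ, (if a j = (if j ∈ s then b j else a j) then (1:ℂ) else 0)) = 1 := by
      apply Finset.prod_eq_one; intro j hj
      simp [Finset.mem_compl.mp hj]
    have h3 : (∏ i ∈ t, P ((if i ∈ s then b i else a i)) (b i)) = ∏ i ∈ t, P (a i) (b i) := by
      apply Finset.prod_congr rfl; intro i hi
      have : i ∉ s := fun hs => (Finset.disjoint_left.mp h) hs hi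
      simp [this]
    have h4 : (∏ j ∈ tᶜ, (if (if j ∈ s then b j else a j) = b j then (1:ℂ) else 0)) =
        ∏ j ∈ (s ∪ t)ᶜ, (if a j = b j then (1:ℂ) else 0) := by
      rw [← Finset.prod_sdiff hst]
      have e1 : (∏ i ∈ s, (if (if i ∈ s then b i else a i) = b i then (1:ℂ) else 0)) = 1 := by
        apply Finset.prod_eq_one; intro i hi; simp [hi]
      have e2 : tᶜ \ s = (s ∪ t)ᶜ := by
        ext x; simp [Finset.mem_sdiff, and_comm]
      rw [e1, e2, mul_one]
      apply Finset.prod_congr rfl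
      intro j hj
      have : j ∉ s := by
        rw [Finset.compl_union, Finset.mem_inter] at hj
        exact Finset.mem_compl.mp hj.1
      simp [this]
    rw [h1, h2, h3, h4, Finset.prod_union h]
    ring
  · intro c _ hc
    obtain ⟨j, hj⟩ := Function.ne_iff.mp hc
    by_cases hjs : j ∈ s
    · have hjt : j ∈ tᶜ := hst hjs
      have : (if c j = b j then (1:ℂ) else 0) = 0 := by
        simp only [hjs, if_pos] at hj; simp [hj]
      unfold opOn
      rw [Finset.prod_eq_zero hjt this]
      ring
    · have : (if a j = c j then (1:ℂ) else 0) = 0 := by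
        simp only [hjs, if_neg, not_false_iff] at hj
        simp [Ne.symm hj]
      unfold opOn
      rw [Finset.prod_eq_zero (Finset.mem_compl.mpr hjs) this]
      ring
  · intro h; exact absurd (Finset.mem_univ _) h

lemma prod_map_op1 (P : Matrix (Fin 2) (Fin 2) ℂ) (l : List ι) (hl : l.Nodup) :
    (l.map (op1 P)).prod = opOn P l.toFinset := by
  induction l with
  | nil =>
    simp only [List.map_nil, List.prod_nil, List.toFinset_nil]
    ext a b
    simp only [opOn, Finset.prod_empty, Finset.compl_empty, one_mul]
    by_cases h : a = b
    · subst h; simp [Matrix.one_apply]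
    · rw [Matrix.one_apply_ne h]
      obtain ⟨j, hj⟩ := Function.ne_iff.mp h
      exact (Finset.prod_eq_zero (Finset.mem_univ j)
        (if_neg hj : (if a j = b j then (1:ℂ) else 0) = 0)).symm
  | cons i l ih =>
    have hnd := List.nodup_cons.mp hl
    rw [List.map_cons, List.prod_cons, ih hnd.2, op1_eq_opOn,
      opOn_mul P (by simpa using hnd.1), List.toFinset_cons, Finset.insert_eq]

lemma prod_ofFn_op1 {N : ℕ} (P : Matrix (Fin 2) (Fin 2) ℂ) :
    (List.ofFn fun i : Fin N => op1 P i).prod = fun s t => ∏ i, P (s i) (t i) := by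
  rw [List.ofFn_eq_map, prod_map_op1 P _ (List.nodup_finRange N)]
  ext s t
  simp [opOn, List.toFinset_finRange]

lemma prod_delta {f g : ι → Fin 2} :
    (∏ i, if f i = g i then (1:ℂ) else 0) = if f = g then 1 else 0 := by
  by_cases h : f = g
  · subst h; simp
  · obtain ⟨j, hj⟩ := Function.ne_iff.mp h
    rw [if_neg h]
    exact Finset.prod_eq_zero (Finset.mem_univ j)
      (if_neg hj : (if f j = g j then (1:ℂ) else 0) = 0)

lemma prod_ofFn_diagonal {α : Type*} [Fintype α] [DecidableEq α] {N : ℕ} (d : Fin N → α → ℂ) :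
    (List.ofFn fun i => Matrix.diagonal (d i)).prod = Matrix.diagonal (fun a => ∏ i, d i a) := by
  induction N with
  | zero => simp
  | succ n ih =>
    rw [List.ofFn_succ, List.prod_cons, ih (fun i => d i.succ), Matrix.diagonal_mul_diagonal]
    have : (fun a => d 0 a * ∏ i : Fin n, d i.succ a) = fun a => ∏ i : Fin (n+1), d i a := by
      funext a; rw [Fin.prod_univ_succ]
    rw [this]

lemma kron_one_prod {N : ℕ} (l : List (MatQ N)) :
    (l.map fun B => (1 : MatQ N) ⊗ₖ B).prod = (1 : MatQ N) ⊗ₖ l.prod := by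
  induction l with
  | nil => simp [Matrix.one_kronecker_one]
  | cons A l ih =>
    rw [List.map_cons, List.prod_cons, List.prod_cons, ih, ← Matrix.mul_kronecker_mul, one_mul]

/-- per-site Hadamard/CZ contraction identity -/
lemma had_site (a c : Fin 2) :
    ∑ b : Fin 2, Hg a b * (if c = 1 ∧ b = 1 then (-1:ℂ) else 1)
      = (Real.sqrt 2 : ℂ) * (if a = c then 1 else 0) := by
  have h2 := sqrt2_mul_self
  have hne := sqrt2_ne_zero
  fin_cases a <;> fin_cases c <;>
    simp [Hg, Fin.sum_univ_two] <;>
    field_simp <;>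
    linear_combination (norm := ring_nf) (-1 : ℂ) * h2

lemma braPlus_prod {N : ℕ} (s : QIdx N) :
    (∏ i, braPlus (s i)) = ((Real.sqrt 2 : ℂ)⁻¹) ^ N := by
  simp [braPlus, ketPlus, Finset.prod_const, Complex.star_def, Complex.conj_ofReal]

lemma ketPlusAll_eq {N : ℕ} (t : QIdx N) :
    ketPlusAll (Fin N) t = ((Real.sqrt 2 : ℂ)⁻¹) ^ N := by
  simp [ketPlusAll, ketPlus, Finset.prod_const]

set_option maxHeartbeats 2000000 in
/-- The key single-cell identity: one unit cell implements `T`. -/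
lemma cell {N : ℕ} (T : MatQ N) (u : QIdx N → ℂ) :
    ((Real.sqrt 2 : ℂ) ^ N) • contractIn (fun _ => braPlus)
      ((UT T).mulVec (kronVec u (ketPlusAll (Fin N)))) = T.mulVec u := by
  classical
  set κ : ℂ := (Real.sqrt 2 : ℂ)⁻¹ with hκ
  set Hall : MatQ N := fun s t => ∏ i, Hg (s i) (t i) with hHall
  set dAll : QIdx N × QIdx N → ℂ :=
    fun p => ∏ i, (if p.1 i = 1 ∧ p.2 i = 1 then (-1:ℂ) else 1) with hdAll
  have hUT : UT T = ((1 : MatQ N) ⊗ₖ (T * Hall)) * Matrix.diagonal dAll := by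
    unfold UT
    have h1 : (List.ofFn fun i : Fin N => (1 : MatQ N) ⊗ₖ op1 Hg i).prod
        = (1 : MatQ N) ⊗ₖ Hall := by
      have := kron_one_prod (List.ofFn fun i : Fin N => op1 Hg i)
      rw [List.map_ofFn] at this
      rw [show (List.ofFn fun i : Fin N => (1 : MatQ N) ⊗ₖ op1 Hg i)
          = List.ofFn ((fun B => (1 : MatQ N) ⊗ₖ B) ∘ fun i : Fin N => op1 Hg i) from rfl,
        this, prod_ofFn_op1, hHall]
    have h2 : (List.ofFn fun i : Fin N => czIO i).prod = Matrix.diagonal dAll := by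
      rw [show (List.ofFn fun i : Fin N => czIO i) = List.ofFn (fun i : Fin N =>
        Matrix.diagonal (fun p : QIdx N × QIdx N =>
          if p.1 i = 1 ∧ p.2 i = 1 then (-1:ℂ) else 1)) from rfl, prod_ofFn_diagonal]
    rw [h1, h2, ← Matrix.mul_kronecker_mul, one_mul]
  have hdiag : (Matrix.diagonal dAll).mulVec (kronVec u (ketPlusAll (Fin N)))
      = fun p => dAll p * (u p.1 * κ ^ N) := by
    funext p
    rw [Matrix.mulVec_diagonal]
    congr 1
    rw [show kronVec u (ketPlusAll (Fin N)) p = u p.1 * ketPlusAll (Fin N) p.2 from rfl,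
      ketPlusAll_eq]
  have hv : ∀ s t0, ((UT T).mulVec (kronVec u (ketPlusAll (Fin N)))) (s, t0)
      = ∑ t', (T * Hall) t0 t' * (dAll (s, t') * (u s * κ ^ N)) := by
    intro s t0
    rw [hUT, ← Matrix.mulVec_mulVec, hdiag]
    rw [show (((1 : MatQ N) ⊗ₖ (T * Hall)) *ᵥ fun p => dAll p * (u p.1 * κ ^ N)) (s, t0)
      = ∑ p : QIdx N × QIdx N, ((1 : MatQ N) ⊗ₖ (T * Hall)) (s, t0) p
          * (dAll p * (u p.1 * κ ^ N)) from rfl]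
    rw [Fintype.sum_prod_type]
    rw [Finset.sum_eq_single s]
    · apply Finset.sum_congr rfl
      intro t' _
      simp [Matrix.kroneckerMap_apply, Matrix.one_apply]
    · intro c _ hc
      apply Finset.sum_eq_zero
      intro t' _
      simp [Matrix.kroneckerMap_apply, Matrix.one_apply, Ne.symm hc]
    · intro h; exact absurd (Finset.mem_univ _) h
  have inner : ∀ (s t'' : QIdx N),
      (∑ t', Hall t'' t' * dAll (s, t'))
        = (Real.sqrt 2 : ℂ) ^ N * (if t'' = s then 1 else 0) := by
    intro s t''
    have hfac : ∀ t' : QIdx N, Hall t'' t' * dAll (s, t')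
        = ∏ i, (Hg (t'' i) (t' i) * (if s i = 1 ∧ t' i = 1 then (-1:ℂ) else 1)) := by
      intro t'
      rw [hHall, hdAll, ← Finset.prod_mul_distrib]
    calc (∑ t' : QIdx N, Hall t'' t' * dAll (s, t'))
        = ∑ t' : QIdx N, ∏ i, (Hg (t'' i) (t' i) *
            (if s i = 1 ∧ t' i = 1 then (-1:ℂ) else 1)) :=
          Finset.sum_congr rfl (fun t' _ => hfac t')
      _ = ∏ i, ∑ b : Fin 2, Hg (t'' i) b * (if s i = 1 ∧ b = 1 then (-1:ℂ) else 1) :=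
          (Fintype.prod_sum (fun (i : Fin N) (b : Fin 2) =>
            Hg (t'' i) b * (if s i = 1 ∧ b = 1 then (-1:ℂ) else 1))).symm
      _ = ∏ i, ((Real.sqrt 2 : ℂ) * (if t'' i = s i then 1 else 0)) :=
          Finset.prod_congr rfl (fun i _ => had_site _ _)
      _ = (Real.sqrt 2 : ℂ) ^ N * ∏ i, (if t'' i = s i then (1:ℂ) else 0) := by
          rw [Finset.prod_mul_distrib, Finset.prod_const, Finset.card_univ, Fintype.card_fin]
      _ = (Real.sqrt 2 : ℂ) ^ N * (if t'' = s then 1 else 0) := by rw [prod_delta]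
  funext t
  rw [Pi.smul_apply, smul_eq_mul]
  unfold contractIn
  have hterm : ∀ s : QIdx N, (∏ i, braPlus (s i))
      * ((UT T).mulVec (kronVec u (ketPlusAll (Fin N)))) (s, t)
      = κ ^ N * ((Real.sqrt 2 : ℂ) ^ N * T t s * (u s * κ ^ N)) := by
    intro s
    rw [braPlus_prod, hv s t]
    congr 1
    have swap : ∀ t' : QIdx N, (T * Hall) t t' * (dAll (s, t') * (u s * κ ^ N))
        = ∑ t'' : QIdx N, T t t'' * (Hall t'' t' * dAll (s, t')) * (u s * κ ^ N) := by
      intro t'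
      rw [Matrix.mul_apply, Finset.sum_mul]
      apply Finset.sum_congr rfl
      intro t'' _
      ring
    simp_rw [swap]
    rw [Finset.sum_comm]
    have : ∀ t'' : QIdx N, (∑ t' : QIdx N, T t t'' * (Hall t'' t' * dAll (s, t')) * (u s * κ ^ N))
        = T t t'' * ((Real.sqrt 2 : ℂ) ^ N * (if t'' = s then 1 else 0)) * (u s * κ ^ N) := by
      intro t''
      rw [← inner s t'', ← Finset.sum_mul, ← Finset.mul_sum]
    simp_rw [this]
    rw [Finset.sum_eq_single s]
    · rw [if_pos rfl]
      ring
    · intro c _ hc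
      simp [hc]
    · intro h; exact absurd (Finset.mem_univ _) h
  simp_rw [hterm]
  rw [Matrix.mulVec, dotProduct, Finset.mul_sum]
  apply Finset.sum_congr rfl
  intro s _
  have h1 : (Real.sqrt 2 : ℂ) ^ N * κ ^ N = 1 := by
    rw [hκ, ← mul_pow, mul_inv_cancel₀ sqrt2_ne_zero, one_pow]
  have h2 : ((Real.sqrt 2 : ℂ) ^ N * κ ^ N) * ((Real.sqrt 2 : ℂ) ^ N * κ ^ N) = 1 := by
    rw [h1, one_mul]
  linear_combination (T t s * u s) * h2

lemma foldl_mulVec {n : Type*} [Fintype n] [DecidableEq n] (l : List (Matrix n n ℂ))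
    (v : n → ℂ) :
    (l.map (fun M => fun w : n → ℂ => M.mulVec w)).foldl (fun w f => f w) v
      = l.reverse.prod.mulVec v := by
  induction l generalizing v with
  | nil => simp
  | cons M l ih =>
    simp only [List.map_cons, List.foldl_cons, List.reverse_cons, List.prod_append,
      List.prod_cons, List.prod_nil, mul_one]
    rw [ih (M.mulVec v), Matrix.mulVec_mulVec]

lemma prod_map_conj {n : Type*} [Fintype n] [DecidableEq n] (U V : Matrix n n ℂ)
    (hUV : U * V = 1) (hVU : V * U = 1) (l : List (Matrix n n ℂ)) :
    (l.map fun A => U * A * V).prod = U * l.prod * V := by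
  induction l with
  | nil => simp [hUV]
  | cons A l ih =>
    simp only [List.map_cons, List.prod_cons, ih]
    have key : V * (U * (l.prod * V)) = l.prod * V := by
      rw [← mul_assoc, hVU, one_mul]
    simp only [mul_assoc]
    rw [key]

lemma telescope {n : Type*} [Fintype n] [DecidableEq n] (T T' : Matrix n n ℂ)
    (h : ∀ k : ℕ, T' ^ k * T ^ k = 1) :
    ∀ (D : ℕ) (A : Fin D → Matrix n n ℂ),
    (List.ofFn fun j => T * A j).reverse.prod =
      (List.ofFn fun j : Fin D => T ^ (D - (j:ℕ)) * A j * T' ^ (D - (j:ℕ))).reverse.prod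
        * T ^ D := by
  intro D
  induction D with
  | zero => intro A; simp
  | succ D ih =>
    intro A
    rw [List.ofFn_succ (f := fun j : Fin (D+1) => T * A j),
      List.ofFn_succ (f := fun j : Fin (D+1) => T ^ (D+1 - (j:ℕ)) * A j * T' ^ (D+1 - (j:ℕ)))]
    simp only [List.reverse_cons, List.prod_append, List.prod_cons, List.prod_nil, mul_one,
      Fin.val_succ, Nat.succ_sub_succ, Fin.val_zero, Nat.sub_zero]
    rw [ih (fun j => A j.succ)]
    have hc : T ^ (D+1) * A 0 * T' ^ (D+1) * T ^ (D+1) = T ^ D * (T * A 0) := by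
      rw [mul_assoc (T ^ (D+1) * A 0), h (D+1), mul_one, pow_succ, mul_assoc]
    rw [mul_assoc, mul_assoc, ← hc]

lemma pow_mod_eq {n : Type*} [Fintype n] [DecidableEq n] (T : Matrix n n ℂ) {L : ℕ}
    (hTL : T ^ L = 1) (a : ℕ) : T ^ a = T ^ (a % L) := by
  conv_lhs => rw [← Nat.div_add_mod a L]
  rw [pow_add, pow_mul, hTL, one_pow, one_mul]

lemma exp_arith {L D j : ℕ} (hL : 1 ≤ L) (hD : L ∣ D) (hj : j < D) :
    (D - j) % L = (L - ((j + 1) % L) + 1) % L := by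
  have hr : (j + 1) % L ≤ j + 1 := Nat.mod_le _ _
  have hrL : (j + 1) % L < L := Nat.mod_lt _ hL
  have h1 : (D - j) + (j + 1) = D + 1 := by omega
  have h2 : (L - ((j + 1) % L) + 1) + (j + 1) ≡ (L - ((j + 1) % L) + 1) + ((j + 1) % L)
      [MOD L] := Nat.ModEq.add_left _ (Nat.mod_modEq (j + 1) L).symm
  have h3 : (L - ((j + 1) % L) + 1) + ((j + 1) % L) = L + 1 := by omega
  have h4 : D + 1 ≡ L + 1 [MOD L] := by
    apply Nat.ModEq.add_right
    calc D ≡ 0 [MOD L] := (Nat.modEq_zero_iff_dvd).mpr hD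
      _ ≡ L [MOD L] := ((Nat.modEq_zero_iff_dvd).mpr dvd_rfl).symm
  have h5 : (D - j) + (j + 1) ≡ (L - ((j + 1) % L) + 1) + (j + 1) [MOD L] := by
    rw [h1]
    exact h4.trans (h3 ▸ h2.symm)
  exact Nat.ModEq.add_right_cancel' (j + 1) h5

end Aux

/-- Theorem 2: the composition `E_D ∘ ⋯ ∘ E_1` of the unit cells of
Algorithm 1 (all outcomes |+⟩) equals
`∏_{j=D,…,1} ∏_{i=N,…,1} exp(iθ_i^j · T^{e(j)} Z_i (T^{e(j)})†)` with
`e(j) = (L - (j mod L) + 1) mod L`. Here `j : Fin D` stands for the mathematical index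
`j+1 ∈ {1,…,D}`; products/compositions with the smallest index act first. -/
theorem mbqc_by_unit_cells {N L D : ℕ} (hL : 1 ≤ L) (T : MatQ N)
    (hT : T ∈ Matrix.unitaryGroup (QIdx N) ℂ) (hTL : T ^ L = 1) (hD : L ∣ D)
    (θ : Fin D → Fin N → ℝ) (v : QIdx N → ℂ) :
    (List.ofFn fun j : Fin D => fun w : QIdx N → ℂ =>
        ((Real.sqrt 2 : ℂ) ^ N) •
          contractIn (fun _ => braPlus)
            ((UT T).mulVec (kronVec
              (((List.ofFn fun i : Fin N => rotZ (θ j i) i).reverse.prod).mulVec w)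
              (ketPlusAll (Fin N))))).foldl (fun w f => f w) v =
      ((List.ofFn fun j : Fin D =>
        (List.ofFn fun i : Fin N =>
          NormedSpace.exp (((θ j i : ℂ) * Complex.I) •
            (T ^ ((L - (((j : ℕ) + 1) % L) + 1) % L) * op1 Zg i *
              (T ^ ((L - (((j : ℕ) + 1) % L) + 1) % L))ᴴ))).reverse.prod).reverse.prod).mulVec
        v := by
  classical
  obtain ⟨hsTT, hTTs⟩ := Unitary.mem_iff.mp hT
  have hT'T : Tᴴ * T = 1 := by rw [← Matrix.star_eq_conjTranspose]; exact hsTT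
  have hTT' : T * Tᴴ = 1 := by rw [← Matrix.star_eq_conjTranspose]; exact hTTs
  have hcomm : Commute Tᴴ T := by unfold Commute SemiconjBy; rw [hT'T, hTT']
  have hpowL : ∀ k : ℕ, Tᴴ ^ k * T ^ k = 1 := fun k => by
    rw [← hcomm.mul_pow, hT'T, one_pow]
  have hpowR : ∀ k : ℕ, T ^ k * Tᴴ ^ k = 1 := fun k => by
    rw [← hcomm.symm.mul_pow, hTT', one_pow]
  have hT'L : Tᴴ ^ L = 1 := by
    rw [← Matrix.conjTranspose_pow, hTL, Matrix.conjTranspose_one]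
  have hTD : T ^ D = 1 := by
    obtain ⟨m, rfl⟩ := hD; rw [pow_mul, hTL, one_pow]
  -- Step 1: each unit cell acts as the matrix `T * R j`.
  have hfun : (List.ofFn fun j : Fin D => fun w : QIdx N → ℂ =>
      ((Real.sqrt 2 : ℂ) ^ N) •
        contractIn (fun _ => braPlus)
          ((UT T).mulVec (kronVec
            (((List.ofFn fun i : Fin N => rotZ (θ j i) i).reverse.prod).mulVec w)
            (ketPlusAll (Fin N)))))
      = List.ofFn ((fun M : MatQ N => fun w : QIdx N → ℂ => M.mulVec w) ∘
          fun j : Fin D => T * (List.ofFn fun i : Fin N => rotZ (θ j i) i).reverse.prod) := by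
    apply congrArg List.ofFn
    funext j w
    rw [cell T, Matrix.mulVec_mulVec]
    rfl
  rw [hfun, ← List.map_ofFn, foldl_mulVec]
  -- Step 2: telescoping.
  have htel := telescope T Tᴴ hpowL D
    (fun j : Fin D => (List.ofFn fun i : Fin N => rotZ (θ j i) i).reverse.prod)
  rw [htel, hTD, mul_one]
  -- Step 3+4: identify the factors.
  have hlist : (List.ofFn fun j : Fin D =>
        T ^ (D - (j:ℕ)) * (List.ofFn fun i : Fin N => rotZ (θ j i) i).reverse.prod
          * Tᴴ ^ (D - (j:ℕ)))
      = List.ofFn fun j : Fin D =>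
        (List.ofFn fun i : Fin N =>
          NormedSpace.exp (((θ j i : ℂ) * Complex.I) •
            (T ^ ((L - (((j : ℕ) + 1) % L) + 1) % L) * op1 Zg i *
              (T ^ ((L - (((j : ℕ) + 1) % L) + 1) % L))ᴴ))).reverse.prod := by
    apply congrArg List.ofFn
    funext j
    set ej : ℕ := (L - (((j : ℕ) + 1) % L) + 1) % L with hej
    have h1 : T ^ (D - (j:ℕ)) = T ^ ej := by
      rw [pow_mod_eq T hTL (D - (j:ℕ)), exp_arith hL hD j.isLt]
    have h2 : Tᴴ ^ (D - (j:ℕ)) = (T ^ ej)ᴴ := by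
      rw [Matrix.conjTranspose_pow, pow_mod_eq Tᴴ hT'L (D - (j:ℕ)), exp_arith hL hD j.isLt]
    rw [h1, h2]
    set U : MatQ N := T ^ ej with hU
    have hU1 : U * Uᴴ = 1 := by rw [hU, Matrix.conjTranspose_pow]; exact hpowR ej
    have hU2 : Uᴴ * U = 1 := by rw [hU, Matrix.conjTranspose_pow]; exact hpowL ej
    have hfac : ∀ i : Fin N,
        NormedSpace.exp (((θ j i : ℂ) * Complex.I) • (U * op1 Zg i * Uᴴ))
          = U * rotZ (θ j i) i * Uᴴ := by
      intro i
      have hsm : ((θ j i : ℂ) * Complex.I) • (U * op1 Zg i * Uᴴ)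
          = U * ((((θ j i : ℂ)) * Complex.I) • op1 Zg i) * Uᴴ := by
        rw [Matrix.mul_smul, Matrix.smul_mul]
      rw [hsm, rotZ]
      exact Matrix.exp_units_conj (⟨U, Uᴴ, hU1, hU2⟩ : (MatQ N)ˣ) _
    simp only [hfac]
    rw [show (List.ofFn fun i : Fin N => U * rotZ (θ j i) i * Uᴴ)
        = (List.ofFn fun i : Fin N => rotZ (θ j i) i).map (fun A => U * A * Uᴴ) from
          by rw [List.map_ofFn]; rfl,
      ← List.map_reverse, prod_map_conj U Uᴴ hU1 hU2]
  rw [hlist]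


end QCA

end
end
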